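/- arXiv:math/0511135 — 3 statements merged into one kernel-verified Lean document; each statement's English description precedes it below -/
import Mathlib

section
/- For a finite group Γ, an integer q, and any function e : Γ → ℕ that is constant on conjugacy classes, one has (1/|Γ|) · Σ_{(g,h) ∈ Γ×Γ, h g h⁻¹ = g^q} t^{e(g)} = Σ_{C} t^{e(C)}, where the right-hand sum runs over the conjugacy classes C of Γ that are stable under the map x ↦ x^q, t is any element of a commutative ring (or ℚ), and e(C) denotes the common value of e on C. -/
open scoped Classical
set_option linter.unusedSectionVars false

section Aux

variable {Γ : Type*} [Group Γ] [Fintype Γ]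

/-- The set of `h` conjugating `g` to `x`. -/
private noncomputable def fibset (g x : Γ) : Finset Γ := Finset.univ.filter (fun h => h * g * h⁻¹ = x)

private lemma fibset_card_eq {g x : Γ} (hx : IsConj g x) :
    (fibset g x).card = (fibset g g).card := by
  obtain ⟨h₀, hh₀⟩ := isConj_iff.mp hx
  apply Finset.card_bij' (fun h _ => h₀⁻¹ * h) (fun h _ => h₀ * h)
  · intro h hh
    simp only [fibset, Finset.mem_filter, Finset.mem_univ, true_and] at hh ⊢
    have key : h * g * h⁻¹ = h₀ * g * h₀⁻¹ := hh.trans hh₀.symm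
    calc h₀⁻¹ * h * g * (h₀⁻¹ * h)⁻¹ = h₀⁻¹ * (h * g * h⁻¹) * h₀ := by group
    _ = h₀⁻¹ * (h₀ * g * h₀⁻¹) * h₀ := by rw [key]
    _ = g := by group
  · intro h hh
    simp only [fibset, Finset.mem_filter, Finset.mem_univ, true_and] at hh ⊢
    calc h₀ * h * g * (h₀ * h)⁻¹ = h₀ * (h * g * h⁻¹) * h₀⁻¹ := by group
    _ = h₀ * g * h₀⁻¹ := by rw [hh]
    _ = x := hh₀
  · intro h _; group
  · intro h _; group

private noncomputable def classF (g : Γ) : Finset Γ := Finset.univ.filter (fun x => IsConj g x)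

private lemma fibset_mul_classF (g : Γ) :
    (fibset g g).card * (classF g).card = Fintype.card Γ := by
  have h1 : (Finset.univ : Finset Γ).card
      = ∑ x ∈ classF g, ((Finset.univ : Finset Γ).filter (fun h => h * g * h⁻¹ = x)).card := by
    apply Finset.card_eq_sum_card_fiberwise
    intro h _
    simp only [classF, Finset.mem_coe, Finset.mem_filter, Finset.mem_univ, true_and]
    exact isConj_iff.mpr ⟨h, rfl⟩
  have h2 : ∀ x ∈ classF g,
      ((Finset.univ : Finset Γ).filter (fun h => h * g * h⁻¹ = x)).card
        = (fibset g g).card := by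
    intro x hx
    simp only [classF, Finset.mem_filter, Finset.mem_univ, true_and] at hx
    exact fibset_card_eq hx
  rw [← Finset.card_univ, h1, Finset.sum_congr rfl h2, Finset.sum_const, smul_eq_mul, mul_comm]

omit [Fintype Γ] in
private lemma isConj_zpow {a b : Γ} (h : IsConj a b) (q : ℤ) : IsConj (a ^ q) (b ^ q) := by
  obtain ⟨c, hc⟩ := isConj_iff.mp h
  exact isConj_iff.mpr ⟨c, by rw [← hc, conj_zpow]⟩

private lemma stable_congr {g g' : Γ} (q : ℤ) (h : ConjClasses.mk g = ConjClasses.mk g') :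
    (ConjClasses.mk (g ^ q) = ConjClasses.mk g ↔
      ConjClasses.mk (g' ^ q) = ConjClasses.mk g') := by
  have hc : IsConj g g' := ConjClasses.mk_eq_mk_iff_isConj.mp h
  have hq : ConjClasses.mk (g ^ q) = ConjClasses.mk (g' ^ q) :=
    ConjClasses.mk_eq_mk_iff_isConj.mpr (isConj_zpow hc q)
  rw [hq, h]

end Aux

/-- For a finite group `Γ`, an integer `q`, and a function `e : Γ → ℕ` constant on
conjugacy classes, `(1/|Γ|) ∑_{(g,h) : h g h⁻¹ = g^q} t^{e g}` equals the sum of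
`t^{e C}` over the conjugacy classes `C` stable under `x ↦ x^q`. -/
theorem stmt1 (Γ : Type*) [Group Γ] [Fintype Γ] (q : ℤ) (e : Γ → ℕ)
    (he : ∀ g h : Γ, e (h * g * h⁻¹) = e g)
    (E : ConjClasses Γ → ℕ) (hE : ∀ g : Γ, E (ConjClasses.mk g) = e g)
    (t : ℚ) :
    (Fintype.card Γ : ℚ)⁻¹ *
      ∑ p : Γ × Γ, (if p.2 * p.1 * p.2⁻¹ = p.1 ^ q then t ^ e p.1 else 0)
    = ∑ᶠ C : ConjClasses Γ,
        (if ∀ g : Γ, ConjClasses.mk g = C → ConjClasses.mk (g ^ q) = C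
          then t ^ E C else 0) := by
  have e_congr : ∀ g g' : Γ, ConjClasses.mk g = ConjClasses.mk g' → e g = e g' := by
    intro g g' h
    obtain ⟨c, hc⟩ := isConj_iff.mp (ConjClasses.mk_eq_mk_iff_isConj.mp h)
    rw [← hc, he]
  -- Step 1: rewrite the inner double sum.
  have step1 : ∑ p : Γ × Γ, (if p.2 * p.1 * p.2⁻¹ = p.1 ^ q then t ^ e p.1 else 0)
      = ∑ g : Γ, (if ConjClasses.mk (g ^ q) = ConjClasses.mk g
          then ((fibset g g).card : ℚ) * t ^ e g else 0) := by
    rw [Fintype.sum_prod_type]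
    refine Finset.sum_congr rfl fun g _ => ?_
    have : ∑ h : Γ, (if h * g * h⁻¹ = g ^ q then t ^ e g else 0)
        = ((fibset g (g ^ q)).card : ℚ) * t ^ e g := by
      rw [← Finset.sum_filter, Finset.sum_const, nsmul_eq_mul]; rfl
    rw [this]
    by_cases hst : ConjClasses.mk (g ^ q) = ConjClasses.mk g
    · rw [if_pos hst, fibset_card_eq ((ConjClasses.mk_eq_mk_iff_isConj.mp hst).symm)]
    · rw [if_neg hst]
      have : fibset g (g ^ q) = ∅ := by
        apply Finset.filter_false_of_mem
        intro h _ hh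
        exact hst (ConjClasses.mk_eq_mk_iff_isConj.mpr (isConj_iff.mpr ⟨h, hh⟩)).symm
      rw [this]; simp
  rw [step1, Finset.mul_sum, finsum_eq_sum_of_fintype]
  -- Step 2: group the left sum by conjugacy classes.
  rw [← Finset.sum_fiberwise (Finset.univ : Finset Γ) (fun g => ConjClasses.mk g)
    (fun g => (Fintype.card Γ : ℚ)⁻¹ *
      (if ConjClasses.mk (g ^ q) = ConjClasses.mk g
        then ((fibset g g).card : ℚ) * t ^ e g else 0))]
  refine Finset.sum_congr rfl fun C _ => ?_
  obtain ⟨g₀, rfl⟩ := ConjClasses.mk_surjective C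
  by_cases hst : ConjClasses.mk (g₀ ^ q) = ConjClasses.mk g₀
  · -- stable class
    have hcond : ∀ g : Γ, ConjClasses.mk g = ConjClasses.mk g₀ →
        ConjClasses.mk (g ^ q) = ConjClasses.mk g₀ := by
      intro g hg
      rw [← hg]
      exact (stable_congr q hg).mpr hst
    rw [if_pos hcond]
    have hclass_ne : ((classF g₀).card : ℚ) ≠ 0 := by
      have : g₀ ∈ classF g₀ := by
        simp only [classF, Finset.mem_filter, Finset.mem_univ, true_and]
        exact IsConj.refl g₀
      exact_mod_cast Finset.card_ne_zero_of_mem this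
    have hterm : ∀ g ∈ Finset.univ.filter (fun g => ConjClasses.mk g = ConjClasses.mk g₀),
        (Fintype.card Γ : ℚ)⁻¹ *
          (if ConjClasses.mk (g ^ q) = ConjClasses.mk g
            then ((fibset g g).card : ℚ) * t ^ e g else 0)
        = ((classF g₀).card : ℚ)⁻¹ * t ^ E (ConjClasses.mk g₀) := by
      intro g hg
      simp only [Finset.mem_filter, Finset.mem_univ, true_and] at hg
      have hstg : ConjClasses.mk (g ^ q) = ConjClasses.mk g := by
        rw [hg]; exact hcond g hg
      rw [if_pos hstg]
      have hcF : classF g = classF g₀ := by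
        have hc : IsConj g g₀ := ConjClasses.mk_eq_mk_iff_isConj.mp hg
        ext x
        simp only [classF, Finset.mem_filter, Finset.mem_univ, true_and]
        exact ⟨fun h => hc.symm.trans h, fun h => hc.trans h⟩
      have heg : e g = e g₀ := e_congr g g₀ hg
      have hcard : ((fibset g g).card : ℚ) * ((classF g₀).card : ℚ) = (Fintype.card Γ : ℚ) := by
        rw [← hcF]
        exact_mod_cast fibset_mul_classF g
      have hΓ : (Fintype.card Γ : ℚ) ≠ 0 := by
        exact_mod_cast Fintype.card_ne_zero
      rw [hE g₀, heg]
      field_simp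
      rw [← hcard]; ring
    rw [Finset.sum_congr rfl hterm, Finset.sum_const, nsmul_eq_mul]
    have hfiber : (Finset.univ.filter (fun g => ConjClasses.mk g = ConjClasses.mk g₀)).card
        = (classF g₀).card := by
      congr 1
      ext g
      simp only [classF, Finset.mem_filter, Finset.mem_univ, true_and]
      rw [ConjClasses.mk_eq_mk_iff_isConj]
      exact ⟨IsConj.symm, IsConj.symm⟩
    rw [hfiber, ← mul_assoc, mul_inv_cancel₀ hclass_ne, one_mul]
  · -- unstable class
    have hcond : ¬ ∀ g : Γ, ConjClasses.mk g = ConjClasses.mk g₀ →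
        ConjClasses.mk (g ^ q) = ConjClasses.mk g₀ := by
      intro h
      exact hst (h g₀ rfl)
    rw [if_neg hcond]
    apply Finset.sum_eq_zero
    intro g hg
    simp only [Finset.mem_filter, Finset.mem_univ, true_and] at hg
    have : ¬ ConjClasses.mk (g ^ q) = ConjClasses.mk g := by
      intro h
      exact hst ((stable_congr q hg).mp h)
    rw [if_neg this, mul_zero]
end

section
/- Define M_n(q) = q^{-n} Σ_{j=0}^{n} Σ_{i=0}^{j} P(j, i) P(n - j) q^{i}, where P(j,i) is the number of partitions of j into exactly i parts and P(m) is the number of partitions of m. Then in ℚ(q)[[x]], Σ_{n≥0} M_n(q) x^n = ∏_{i≥1} (1 - x^i q^{-i})^{-1} (1 - x^i q^{1-i})^{-1}. -/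
open PowerSeries Finset
noncomputable section
variable {K : Type*} [Field K]

lemma geom_inv (a : K) (i : ℕ) (hi : 0 < i) :
    (1 - PowerSeries.C a * X ^ i)⁻¹
      = PowerSeries.mk (fun m => if i ∣ m then a ^ (m / i) else 0) := by
  rw [PowerSeries.inv_eq_iff_mul_eq_one]
  · ext n
    rw [mul_sub, mul_one, map_sub, ← mul_assoc,
      show PowerSeries.mk (fun m => if i ∣ m then a ^ (m / i) else 0) * PowerSeries.C a
        = PowerSeries.C a * PowerSeries.mk (fun m => if i ∣ m then a ^ (m / i) else 0) from
        mul_comm _ _,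
      coeff_mul_X_pow', coeff_C_mul, coeff_mk]
    cases n with
    | zero => simp [Nat.not_le.mpr hi, hi.ne']
    | succ n =>
      rw [coeff_mk, coeff_one, if_neg (Nat.succ_ne_zero n)]
      by_cases hd : i ∣ n + 1
      · have hle : i ≤ n + 1 := Nat.le_of_dvd (Nat.succ_pos n) hd
        rw [if_pos hd, if_pos hle, if_pos (Nat.dvd_sub hd dvd_rfl), sub_eq_zero]
        obtain ⟨k, hk⟩ := hd
        match k with
        | 0 => simp at hk
        | m + 1 =>
          have hsub : n + 1 - i = i * m := by
            have : i * (m + 1) = i * m + i := by ring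
            omega
          rw [hsub, hk, Nat.mul_div_cancel_left _ hi, Nat.mul_div_cancel_left _ hi, pow_succ']
      · rw [if_neg hd, zero_sub, neg_eq_zero]
        split_ifs with hle hd2
        · exfalso
          apply hd
          have := Nat.dvd_add hd2 (dvd_refl i)
          rwa [Nat.sub_add_cancel hle] at this
        · exact mul_zero a
        · rfl
  · simp [map_pow, zero_pow hi.ne']

lemma zpow_sum' (x : K) (hx : x ≠ 0) {ι : Type*} (s : Finset ι) (e : ι → ℤ) :
    x ^ (∑ i ∈ s, e i) = ∏ i ∈ s, x ^ e i := by
  induction s using Finset.cons_induction with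
  | empty => simp
  | cons a s ha ih => rw [Finset.sum_cons, Finset.prod_cons, zpow_add₀ hx, ih]

lemma part_mem_Icc {j n : ℕ} (hj : j ≤ n) (p : Nat.Partition j) {a : ℕ}
    (ha : a ∈ p.parts) : a ∈ Finset.Icc 1 n := by
  rw [Finset.mem_Icc]
  refine ⟨p.parts_pos ha, le_trans ?_ hj⟩
  conv_rhs => rw [← p.parts_sum]
  exact Multiset.single_le_sum (fun _ _ => Nat.zero_le _) _ ha

lemma sum_count_mul {j n : ℕ} (hj : j ≤ n) (p : Nat.Partition j) :
    ∑ i ∈ Finset.Icc 1 n, p.parts.count i * i = j := by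
  classical
  have h := Finset.sum_multiset_count_of_subset p.parts (Finset.Icc 1 n)
    (fun a ha => part_mem_Icc hj p (Multiset.mem_toFinset.mp ha))
  rw [p.parts_sum] at h
  simp only [smul_eq_mul] at h
  omega

lemma sum_count_card {j n : ℕ} (hj : j ≤ n) (p : Nat.Partition j) :
    ∑ i ∈ Finset.Icc 1 n, p.parts.count i = p.parts.card := by
  classical
  rw [← Multiset.toFinset_sum_count_eq]
  refine (Finset.sum_subset (fun a ha => part_mem_Icc hj p (Multiset.mem_toFinset.mp ha))
    fun a _ ha => ?_).symm
  rw [Multiset.count_eq_zero]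
  exact fun h => ha (Multiset.mem_toFinset.mpr h)

def partFinsupp {j : ℕ} (p : Nat.Partition j) : ℕ →₀ ℕ :=
  ⟨p.parts.toFinset, fun i => p.parts.count i * i, fun a => by
    simp only [Multiset.mem_toFinset, ne_eq, mul_eq_zero, not_or, Multiset.count_eq_zero, not_not]
    constructor
    · intro ha
      exact ⟨ha, (p.parts_pos ha).ne'⟩
    · intro ha; exact ha.1⟩

lemma partFinsupp_apply {j : ℕ} (p : Nat.Partition j) (i : ℕ) :
    partFinsupp p i = p.parts.count i * i := rfl

lemma coeffA (q : K) (hq : q ≠ 0) (c : ℤ) (n j : ℕ) (hj : j ≤ n) :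
    (PowerSeries.coeff j) (∏ i ∈ Finset.Icc 1 n,
        (1 - PowerSeries.C (q ^ (c - (i : ℤ))) * X ^ i)⁻¹)
    = ∑ p : Nat.Partition j, q ^ (c * (p.parts.card : ℤ) - (j : ℤ)) := by
  classical
  rw [Finset.prod_congr rfl fun (i : ℕ) hi => geom_inv (q ^ (c - (i:ℤ))) i (Finset.mem_Icc.mp hi).1,
    PowerSeries.coeff_prod]
  simp_rw [coeff_mk]
  rw [← Finset.sum_filter_of_ne
    (p := fun l : ℕ →₀ ℕ => ∀ i ∈ Finset.Icc 1 n, i ∣ l i)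
    (fun l _ hne i hi => by
      by_contra hnd
      exact hne (Finset.prod_eq_zero hi (by rw [if_neg hnd])))]
  symm
  refine Finset.sum_bij'
    (i := fun p (_ : p ∈ Finset.univ) => partFinsupp p)
    (j := fun l hl =>
      ⟨∑ i ∈ Finset.Icc 1 n, Multiset.replicate (l i / i) i, ?_, ?_⟩)
    ?_ ?_ ?_ ?_ ?_
  · -- parts_pos
    intro i hi
    simp only [Multiset.mem_sum, Multiset.mem_replicate] at hi
    obtain ⟨t, ht, -, rfl⟩ := hi
    exact (Finset.mem_Icc.mp ht).1
  · -- parts_sum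
    simp only [Finset.mem_filter, mem_finsuppAntidiag] at hl
    obtain ⟨⟨hsum, hsupp⟩, hdvd⟩ := hl
    simp_rw [Multiset.sum_sum, Multiset.sum_replicate, smul_eq_mul]
    rw [← hsum]
    exact Finset.sum_congr rfl fun i hi => Nat.div_mul_cancel (hdvd i hi)
  · -- maps to
    intro p _
    simp only [Finset.mem_filter, mem_finsuppAntidiag]
    refine ⟨⟨?_, ?_⟩, ?_⟩
    · exact sum_count_mul hj p
    · intro a ha
      have : a ∈ p.parts.toFinset := ha
      exact part_mem_Icc hj p (Multiset.mem_toFinset.mp this)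
    · intro i _
      rw [partFinsupp_apply]
      exact dvd_mul_left i _
  · -- maps to (inverse)
    intro l hl
    exact Finset.mem_univ _
  · -- left inverse
    intro p _
    apply Nat.Partition.ext
    ext a
    rw [Multiset.count_sum']
    simp only [Multiset.count_replicate, partFinsupp_apply]
    rw [Finset.sum_ite_eq' (Finset.Icc 1 n)]
    split_ifs with h
    · rw [Nat.mul_div_cancel _ (Finset.mem_Icc.mp h).1]
    · symm
      rw [Multiset.count_eq_zero]
      exact fun hmem => h (part_mem_Icc hj p hmem)
  · -- right inverse
    intro l hl
    simp only [Finset.mem_filter, mem_finsuppAntidiag] at hl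
    obtain ⟨⟨hsum, hsupp⟩, hdvd⟩ := hl
    ext a
    rw [partFinsupp_apply]
    rw [Multiset.count_sum']
    simp only [Multiset.count_replicate]
    rw [Finset.sum_ite_eq' (Finset.Icc 1 n)]
    split_ifs with h
    · exact Nat.div_mul_cancel (hdvd a h)
    · rw [zero_mul]
      symm
      rw [← Finsupp.notMem_support_iff]
      exact fun hs => h (hsupp hs)
  · -- values
    intro p _
    have key : ∀ i ∈ Finset.Icc 1 n,
        (if i ∣ partFinsupp p i then (q ^ (c - (i:ℤ))) ^ (partFinsupp p i / i) else 0)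
          = q ^ ((c - (i:ℤ)) * (p.parts.count i : ℤ)) := by
      intro i hi
      rw [partFinsupp_apply, if_pos (dvd_mul_left i _),
        Nat.mul_div_cancel _ (Finset.mem_Icc.mp hi).1, ← zpow_natCast, ← zpow_mul]
    rw [Finset.prod_congr rfl key, ← zpow_sum' q hq]
    congr 1
    have h1 := sum_count_mul hj p
    have h2 := sum_count_card hj p
    simp_rw [sub_mul, Finset.sum_sub_distrib, ← Finset.mul_sum]
    congr 1
    · congr 1
      rw [← h2]
      push_cast
      rfl
    · conv_lhs => rw [← h1]
      push_cast
      exact Finset.sum_congr rfl fun i _ => mul_comm _ _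

lemma card_le_of_partition {m : ℕ} (p : Nat.Partition m) : p.parts.card ≤ m := by
  conv_rhs => rw [← p.parts_sum]
  have := Multiset.card_nsmul_le_sum (s := p.parts) (a := 1) fun x hx => p.parts_pos hx
  simpa using this

lemma fiber_sum (q : K) (m : ℕ) :
    (∑ p : Nat.Partition m, q ^ ((p.parts.card : ℤ) - (m : ℤ)))
    = ∑ i ∈ Finset.range (m + 1),
        ((Finset.univ.filter fun p : Nat.Partition m => p.parts.card = i).card : K)
          * q ^ ((i : ℤ) - (m : ℤ)) := by
  classical
  rw [← Finset.sum_fiberwise_of_maps_to (g := fun p : Nat.Partition m => p.parts.card)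
    (fun p _ => Finset.mem_range.mpr (Nat.lt_succ_of_le (card_le_of_partition p)))]
  refine Finset.sum_congr rfl fun i _ => ?_
  rw [Finset.sum_congr rfl (fun p hp => by
    rw [(Finset.mem_filter.mp hp).2]), Finset.sum_const, nsmul_eq_mul]


/-- With `M_n(q) = q^{-n} ∑_{j=0}^n ∑_{i=0}^j P(j,i) P(n-j) q^i`, one has
`∑_n M_n(q) x^n = ∏_{i≥1} (1 - x^i q^{-i})⁻¹ (1 - x^i q^{1-i})⁻¹` in `ℚ(q)[[x]]`;
stated coefficientwise (factors with `i > n` do not affect the coefficient of `x^n`). -/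
theorem stmt7 (n : ℕ) :
    (PowerSeries.coeff n : PowerSeries (RatFunc ℚ) →ₗ[RatFunc ℚ] RatFunc ℚ)
      (∏ i ∈ Finset.Icc 1 n,
        ((1 - (PowerSeries.C : RatFunc ℚ →+* PowerSeries (RatFunc ℚ)) ((RatFunc.X : RatFunc ℚ) ^ (-(i : ℤ)))
            * PowerSeries.X ^ i)⁻¹
          * (1 - (PowerSeries.C : RatFunc ℚ →+* PowerSeries (RatFunc ℚ)) ((RatFunc.X : RatFunc ℚ) ^ (1 - (i : ℤ)))
            * PowerSeries.X ^ i)⁻¹))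
    = (RatFunc.X : RatFunc ℚ) ^ (-(n : ℤ)) *
        ∑ j ∈ Finset.range (n + 1), ∑ i ∈ Finset.range (j + 1),
          ((Finset.univ.filter fun p : Nat.Partition j => p.parts.card = i).card : RatFunc ℚ)
            * (Fintype.card (Nat.Partition (n - j)) : RatFunc ℚ)
            * (RatFunc.X : RatFunc ℚ) ^ (i : ℕ) := by
  classical
  set q : RatFunc ℚ := RatFunc.X with hqdef
  have hq : q ≠ 0 := RatFunc.X_ne_zero
  have hA : ∀ i : ℕ, q ^ (-(i : ℤ)) = q ^ ((0 : ℤ) - (i : ℤ)) := fun i => by norm_num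
  simp_rw [hA]
  rw [Finset.prod_mul_distrib, PowerSeries.coeff_mul,
    Finset.Nat.sum_antidiagonal_eq_sum_range_succ_mk]
  rw [show (∑ j ∈ Finset.range (n + 1), ∑ i ∈ Finset.range (j + 1),
          ((Finset.univ.filter fun p : Nat.Partition j => p.parts.card = i).card : RatFunc ℚ)
            * (Fintype.card (Nat.Partition (n - j)) : RatFunc ℚ) * q ^ (i : ℕ))
      = ∑ k ∈ Finset.range (n + 1), ∑ i ∈ Finset.range ((n - k) + 1),
          ((Finset.univ.filter fun p : Nat.Partition (n - k) => p.parts.card = i).card : RatFunc ℚ)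
            * (Fintype.card (Nat.Partition (n - (n - k))) : RatFunc ℚ) * q ^ (i : ℕ)
      from (Finset.sum_range_reflect _ _).symm.trans (Finset.sum_congr rfl fun k hk => by
        congr 1 <;> omega)]
  rw [Finset.mul_sum]
  refine Finset.sum_congr rfl fun k hk => ?_
  have hkn : k ≤ n := Nat.lt_succ_iff.mp (Finset.mem_range.mp hk)
  rw [coeffA q hq 0 n k hkn, coeffA q hq 1 n (n - k) (Nat.sub_le n k)]
  simp only [zero_mul, zero_sub, one_mul]
  rw [fiber_sum, Finset.sum_const, Finset.card_univ, nsmul_eq_mul, Nat.sub_sub_self hkn]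
  rw [Finset.mul_sum, Finset.mul_sum]
  refine Finset.sum_congr rfl fun i _ => ?_
  have hcast : ((n - k : ℕ) : ℤ) = (n : ℤ) - (k : ℤ) := by
    push_cast [hkn]; ring
  rw [hcast, ← zpow_natCast q i]
  have hqq : q ^ (-(k : ℤ)) * q ^ ((i : ℤ) - ((n : ℤ) - (k : ℤ)))
      = q ^ (-(n : ℤ)) * q ^ (i : ℤ) := by
    rw [← zpow_add₀ hq, ← zpow_add₀ hq]
    ring_nf
  set Pk := (Fintype.card (Nat.Partition k) : RatFunc ℚ)
  set ci := ((Finset.univ.filter fun p : Nat.Partition (n - k) => p.parts.card = i).card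
    : RatFunc ℚ)
  linear_combination (ci * Pk) * hqq
end
end

section
/- Let M/L/K be a tower of finite field extensions with A = (a₁,...,a_m) a K-basis of L and B = (b₁,...,b_n) an L-basis of M, so that C = (a_i b_j) is a K-basis of M. If all the extensions are separable, then the discriminant satisfies disc_{M/K}(C) = disc_{L/K}(A)^{[M:L]} · Norm_{L/K}(disc_{M/L}(B)). -/
open Matrix Algebra

lemma aux_det_block (K L : Type*) [Field K] [Field L] [Algebra K L] [FiniteDimensional K L]
    {ι κ : Type*} [Fintype ι] [Fintype κ] [DecidableEq ι] [DecidableEq κ]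
    (A : Module.Basis ι K L) (T : Matrix κ κ L) :
    (Matrix.of fun (x y : ι × κ) => Algebra.leftMulMatrix A (T x.2 y.2) x.1 y.1).det
      = Algebra.norm K T.det := by
  set G : Matrix κ κ L → Matrix (ι × κ) (ι × κ) K :=
    fun T => Matrix.of fun (x y : ι × κ) => Algebra.leftMulMatrix A (T x.2 y.2) x.1 y.1 with hG
  show (G T).det = Algebra.norm K T.det
  have Gmul : ∀ M N : Matrix κ κ L, G (M * N) = G M * G N := by
    intro M N
    ext ⟨i, j⟩ ⟨k, l⟩
    show Algebra.leftMulMatrix A ((M * N) j l) i k = _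
    rw [Matrix.mul_apply (M := M), map_sum, Matrix.sum_apply, Matrix.mul_apply,
      Fintype.sum_prod_type, Finset.sum_comm]
    refine Finset.sum_congr rfl fun m _ => ?_
    rw [_root_.map_mul, Matrix.mul_apply]
    rfl
  induction T using Matrix.diagonal_transvection_induction with
  | hdiag D _ =>
    have : G (Matrix.diagonal D) = Matrix.blockDiagonal fun j => Algebra.leftMulMatrix A (D j) := by
      ext ⟨i, j⟩ ⟨k, l⟩
      show Algebra.leftMulMatrix A (Matrix.diagonal D j l) i k = _
      rw [Matrix.blockDiagonal_apply, Matrix.diagonal_apply]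
      by_cases h : j = l <;> simp [h]
    rw [this, Matrix.det_blockDiagonal, Matrix.det_diagonal, map_prod]
    exact Finset.prod_congr rfl fun j _ => (Algebra.norm_eq_matrix_det A (D j)).symm
  | htransvec t =>
    obtain ⟨p, q, hpq, c⟩ := t
    rw [TransvectionStruct.toMatrix_mk, Matrix.det_transvection_of_ne _ _ hpq, _root_.map_one]
    -- show det (G (transvection p q c)) = 1 using block triangularity
    have hbt : (G (Matrix.transvection p q c)).BlockTriangular
        (fun x : ι × κ => (decide (x.2 = q) : Bool)) := by
      intro x y h
      have hx : x.2 = q := by simpa using (Bool.lt_iff.mp h).2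
      have hy : y.2 ≠ q := by
        intro hy; simp [hx, hy] at h
      show Algebra.leftMulMatrix A (Matrix.transvection p q c x.2 y.2) x.1 y.1 = 0
      have : Matrix.transvection p q c x.2 y.2 = 0 := by
        have h1 : ¬(p = x.2 ∧ q = y.2) := fun h' => hy h'.2.symm
        simp [Matrix.transvection, Matrix.one_apply, hx, Ne.symm hy,
          Matrix.single_apply_of_ne _ _ _ _ _ h1]
      rw [this, map_zero]
      rfl
    rw [hbt.det_fintype]
    have hblock : ∀ b : Bool,
        (G (Matrix.transvection p q c)).toSquareBlock (fun x : ι × κ => (decide (x.2 = q) : Bool)) b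
          = 1 := by
      intro b
      ext ⟨x, hx⟩ ⟨y, hy⟩
      show Algebra.leftMulMatrix A (Matrix.transvection p q c x.2 y.2) x.1 y.1 = _
      have hsnd : (x.2 = q) ↔ (y.2 = q) := by
        constructor <;> intro h <;> [skip; skip] <;>
          · have := hx.trans hy.symm; simp only [decide_eq_decide] at this; tauto
      have htr : Matrix.transvection p q c x.2 y.2 = if x.2 = y.2 then 1 else 0 := by
        have h3 : Matrix.single p q c x.2 y.2 = 0 := by
          apply Matrix.single_apply_of_ne
          rintro ⟨rfl, rfl⟩
          exact hpq (hsnd.mpr rfl)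
        show (1 : Matrix κ κ L) x.2 y.2 + Matrix.single p q c x.2 y.2
            = if x.2 = y.2 then 1 else 0
        rw [h3, add_zero, Matrix.one_apply]
      rw [htr]
      by_cases h2 : x.2 = y.2
      · rw [if_pos h2, _root_.map_one]
        simp [Matrix.one_apply, Subtype.ext_iff, Prod.ext_iff, h2]
      · rw [if_neg h2, map_zero]
        simp [Matrix.one_apply, Subtype.ext_iff, Prod.ext_iff, h2]
    simp [hblock]
  | hmul M N hM hN =>
    rw [Gmul, Matrix.det_mul, hM, hN, Matrix.det_mul, _root_.map_mul]

/-- Tower formula for discriminants: for a tower `M/L/K` of finite separable field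
extensions, a `K`-basis `A` of `L` and an `L`-basis `B` of `M`, the combined
`K`-basis `C = (a_i b_j)` of `M` satisfies
`disc_{M/K}(C) = disc_{L/K}(A)^{[M:L]} · Norm_{L/K}(disc_{M/L}(B))`. -/
theorem stmt12 (K L M : Type*) [Field K] [Field L] [Field M]
    [Algebra K L] [Algebra L M] [Algebra K M] [IsScalarTower K L M]
    [FiniteDimensional K L] [FiniteDimensional L M]
    [Algebra.IsSeparable K L] [Algebra.IsSeparable L M] [Algebra.IsSeparable K M]
    {ι κ : Type*} [Fintype ι] [Fintype κ] [DecidableEq ι] [DecidableEq κ]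
    (A : Module.Basis ι K L) (B : Module.Basis κ L M) :
    Algebra.discr K ⇑(A.smulTower B)
      = Algebra.discr K ⇑A ^ Module.finrank L M
        * Algebra.norm K (Algebra.discr L ⇑B) := by
  classical
  set T := Algebra.traceMatrix L ⇑B with hT
  set H : Matrix (ι × κ) (ι × κ) K :=
    Matrix.of fun x y => Algebra.leftMulMatrix A (T x.2 y.2) x.1 y.1 with hH
  have key : Algebra.traceMatrix K ⇑(A.smulTower B)
      = Matrix.blockDiagonal (fun _ : κ => Algebra.traceMatrix K ⇑A) * H := by
    ext ⟨i, j⟩ ⟨k, l⟩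
    rw [Algebra.traceMatrix_apply, Algebra.traceForm_apply, Matrix.mul_apply]
    have lhs : (A.smulTower B) (i, j) * (A.smulTower B) (k, l)
        = (A i * A k) • (B j * B l) := by
      rw [Module.Basis.smulTower_apply, Module.Basis.smulTower_apply, smul_mul_smul_comm]
    rw [lhs, ← Algebra.trace_trace (S := L), _root_.map_smul, smul_eq_mul]
    have hT' : Algebra.trace L M (B j * B l) = T j l := by
      rw [hT, Algebra.traceMatrix_apply, Algebra.traceForm_apply]
    rw [hT', Fintype.sum_prod_type]
    simp only [Matrix.blockDiagonal_apply, ite_mul, zero_mul, Finset.sum_ite_eq,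
      Finset.mem_univ, if_true]
    have hHe : ∀ s, H (s, j) (k, l) = A.repr (T j l * A k) s := fun s =>
      Algebra.leftMulMatrix_eq_repr_mul A (T j l) s k
    have hx : A i * A k * T j l = A i * (T j l * A k) := by ring
    rw [hx]
    conv_lhs => rw [← A.sum_repr (T j l * A k), Finset.mul_sum]
    rw [map_sum]
    refine Finset.sum_congr rfl fun s _ => ?_
    rw [mul_smul_comm, _root_.map_smul, smul_eq_mul, hHe, Algebra.traceMatrix_apply,
      Algebra.traceForm_apply, mul_comm]
  rw [Algebra.discr_def, key, Matrix.det_mul, Matrix.det_blockDiagonal,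
    Finset.prod_const, Finset.card_univ, aux_det_block K L A T,
    ← Module.finrank_eq_card_basis B]
  rw [Algebra.discr_def, Algebra.discr_def, hT]
end
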